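/- Let π = D_{2n} = ⟨x, y | xⁿ = y², xyx = y, y² = 1⟩ be the dihedral group of order 2n. Then the sequence 0 → ℤ → ℤπ → ℤπ² → ℤπ² is exact, where the first map is multiplication by the norm element N, the second map sends v ∈ ℤπ to (v(x−1), v(1−xy)), and the third sends (v,w) to (vN_x + w(1+xy), −v(1+y) + w(x−1)), where N_x = 1 + x + ⋯ + x^{n−1}. -/

import Mathlib

open TensorProduct

section SubQuot
variable {G : Type*} [Group G] {V : Type*} [AddCommGroup V] [Module ℤ V]

/-- The restriction of a representation to an invariant submodule. -/
def subRep (ρ : Representation ℤ G V) (p : Submodule ℤ V)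
    (hp : ∀ g : G, ∀ x ∈ p, ρ g x ∈ p) : Representation ℤ G p where
  toFun g := (ρ g).restrict (hp g)
  map_one' := by
    ext x
    simp [LinearMap.restrict_apply]
  map_mul' g h := by
    ext x
    simp [LinearMap.restrict_apply, map_mul]

/-- The representation induced on the quotient by an invariant submodule. -/
noncomputable def quotRep (ρ : Representation ℤ G V) (p : Submodule ℤ V)
    (hp : ∀ g : G, ∀ x ∈ p, ρ g x ∈ p) : Representation ℤ G (V ⧸ p) where
  toFun g := Submodule.mapQ p p (ρ g) (hp g)
  map_one' := by
    apply LinearMap.ext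
    intro x
    obtain ⟨v, rfl⟩ := Submodule.Quotient.mk_surjective p x
    simp [Submodule.mapQ_apply]
  map_mul' g h := by
    apply LinearMap.ext
    intro x
    obtain ⟨v, rfl⟩ := Submodule.Quotient.mk_surjective p x
    simp [Submodule.mapQ_apply, map_mul]

end SubQuot

section GroupRing
variable (G : Type*) [Group G]

/-- The left regular representation of `G` on the group ring `ℤG`. -/
noncomputable def regRep : Representation ℤ G (MonoidAlgebra ℤ G) where
  toFun g := LinearMap.mulLeft ℤ (MonoidAlgebra.of ℤ G g)
  map_one' := by
    apply LinearMap.ext; intro x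
    simp [MonoidAlgebra.of_apply, ← MonoidAlgebra.one_def]
  map_mul' g h := by
    apply LinearMap.ext; intro x
    simp only [MonoidAlgebra.of_apply, LinearMap.mulLeft_apply, Module.End.mul_apply]
    rw [← mul_assoc, MonoidAlgebra.single_mul_single, mul_one]

/-- The augmentation map `ε : ℤG → ℤ`. -/
noncomputable def aug : MonoidAlgebra ℤ G →ₐ[ℤ] ℤ := MonoidAlgebra.lift ℤ ℤ G 1

/-- The augmentation ideal `I = ker(ε : ℤG → ℤ)`. -/
noncomputable def augI : Ideal (MonoidAlgebra ℤ G) := RingHom.ker (aug G).toRingHom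

/-- The mod 2 augmentation map `ℤG → ℤ/2`. -/
noncomputable def aug2 : MonoidAlgebra ℤ G →+* ZMod 2 :=
  (Int.castRingHom (ZMod 2)).comp (aug G).toRingHom

/-- The ideal `(I, 2) = ker(ℤG → ℤ/2)` generated by the augmentation ideal and `2`. -/
noncomputable def I2 : Ideal (MonoidAlgebra ℤ G) := RingHom.ker (aug2 G)

/-- The norm element `N = ∑_{g ∈ G} g ∈ ℤG`. -/
noncomputable def Nelt [Fintype G] : MonoidAlgebra ℤ G := ∑ g : G, MonoidAlgebra.of ℤ G g

/-- The (left) ideal of `ℤG` generated by the norm element `N`; the quotient by it is `ℤG/N`. -/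
noncomputable def NIdeal [Fintype G] : Ideal (MonoidAlgebra ℤ G) := Ideal.span {Nelt G}

/-- The left ideal `(N, 2)` of `ℤG` generated by the norm element `N` and `2`. -/
noncomputable def N2 [Fintype G] : Ideal (MonoidAlgebra ℤ G) := Ideal.span {Nelt G, 2}

lemma aug_single (g : G) : aug G (MonoidAlgebra.single g 1) = 1 := by
  simp [aug, MonoidAlgebra.lift_single]

lemma of_sub_one_mem_augI (g : G) :
    MonoidAlgebra.of ℤ G g - 1 ∈ (augI G).restrictScalars ℤ := by
  simp [augI, RingHom.mem_ker, map_sub, aug_single]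

lemma of_sub_one_mem_I2 (g : G) :
    MonoidAlgebra.of ℤ G g - 1 ∈ (I2 G).restrictScalars ℤ := by
  simp [I2, aug2, RingHom.mem_ker, map_sub, aug_single]

lemma two_mem_I2 : (2 : MonoidAlgebra ℤ G) ∈ (I2 G).restrictScalars ℤ := by
  have : (aug2 G) 2 = 2 := by simp [map_ofNat]
  simp [I2, RingHom.mem_ker, this]
  decide

lemma N_mem_I2 [Fintype G] (h : Even (Fintype.card G)) :
    Nelt G ∈ (I2 G).restrictScalars ℤ := by
  have : (aug2 G) (Nelt G) = (Fintype.card G : ZMod 2) := by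
    simp [Nelt, map_sum, aug2, aug_single]
  simp only [Submodule.restrictScalars_mem, I2, RingHom.mem_ker, this]
  rw [CharP.cast_eq_zero_iff (ZMod 2) 2]
  exact h.two_dvd

lemma N_mem_N2 [Fintype G] : Nelt G ∈ (N2 G).restrictScalars ℤ :=
  Ideal.subset_span (by simp)

lemma two_mem_N2 [Fintype G] : (2 : MonoidAlgebra ℤ G) ∈ (N2 G).restrictScalars ℤ :=
  Ideal.subset_span (by simp)

lemma ideal_invariant (J : Ideal (MonoidAlgebra ℤ G)) :
    ∀ g : G, ∀ x ∈ J.restrictScalars ℤ, (regRep G) g x ∈ J.restrictScalars ℤ := by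
  intro g x hx
  exact J.mul_mem_left _ hx

/-- A (left) ideal of `ℤG`, regarded as a representation of `G`. -/
noncomputable def idealRep (J : Ideal (MonoidAlgebra ℤ G)) :
    Representation ℤ G ↥(J.restrictScalars ℤ) :=
  subRep (regRep G) (J.restrictScalars ℤ) (ideal_invariant G J)

/-- The quotient `ℤG/N` of `ℤG` by the ideal generated by the norm element, as a
representation of `G`. -/
noncomputable def quotNRep [Fintype G] :
    Representation ℤ G (MonoidAlgebra ℤ G ⧸ (NIdeal G).restrictScalars ℤ) :=
  quotRep (regRep G) ((NIdeal G).restrictScalars ℤ) (ideal_invariant G (NIdeal G))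

/-- `2` as an element of `(I,2)`. -/
noncomputable def twoI2 : ↥((I2 G).restrictScalars ℤ) := ⟨2, two_mem_I2 G⟩

/-- `g - 1` as an element of `(I,2)`. -/
noncomputable def gm1 (g : G) : ↥((I2 G).restrictScalars ℤ) :=
  ⟨MonoidAlgebra.of ℤ G g - 1, of_sub_one_mem_I2 G g⟩

/-- `g - 1` as an element of the augmentation ideal `I`. -/
noncomputable def gm1I (g : G) : ↥((augI G).restrictScalars ℤ) :=
  ⟨MonoidAlgebra.of ℤ G g - 1, of_sub_one_mem_augI G g⟩

/-- The norm element as an element of `(I,2)` (for `G` of even order). -/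
noncomputable def NeltI2 [Fintype G] (h : Even (Fintype.card G)) :
    ↥((I2 G).restrictScalars ℤ) := ⟨Nelt G, N_mem_I2 G h⟩

/-- The norm element as an element of `(N,2)`. -/
noncomputable def NeltN2 [Fintype G] : ↥((N2 G).restrictScalars ℤ) := ⟨Nelt G, N_mem_N2 G⟩

end GroupRing

section Dihedral

/-- The element `x = r 1` (rotation) of the dihedral group, in the group ring `ℤ[D_{2n}]`. -/
noncomputable def XD (n : ℕ) : MonoidAlgebra ℤ (DihedralGroup n) :=
  MonoidAlgebra.of ℤ (DihedralGroup n) (DihedralGroup.r 1)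

/-- The element `y = sr 0` (reflection) of the dihedral group, in the group ring `ℤ[D_{2n}]`. -/
noncomputable def YD (n : ℕ) : MonoidAlgebra ℤ (DihedralGroup n) :=
  MonoidAlgebra.of ℤ (DihedralGroup n) (DihedralGroup.sr 0)

/-- The element `N_x = 1 + x + ⋯ + x^{n-1}` of `ℤ[D_{2n}]`. -/
noncomputable def NxD (n : ℕ) : MonoidAlgebra ℤ (DihedralGroup n) :=
  ∑ i ∈ Finset.range n, XD n ^ i

end Dihedral

section Stmt14Aux

open DihedralGroup Finset

variable {n : ℕ}

private lemma dg_r_inv (i : ZMod n) : (DihedralGroup.r i)⁻¹ = DihedralGroup.r (-i) := rfl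

private lemma dg_sr_inv (i : ZMod n) : (DihedralGroup.sr i)⁻¹ = DihedralGroup.sr i := rfl

private lemma XD_pow (k : ℕ) :
    XD n ^ k = MonoidAlgebra.of ℤ (DihedralGroup n) (DihedralGroup.r (k : ZMod n)) := by
  rw [XD, ← map_pow, DihedralGroup.r_one_pow]

private lemma XYD :
    XD n * YD n = MonoidAlgebra.of ℤ (DihedralGroup n) (DihedralGroup.sr (-1)) := by
  rw [XD, YD, ← map_mul, DihedralGroup.r_mul_sr, zero_sub]

private lemma coeff_mul_of (c : MonoidAlgebra ℤ (DihedralGroup n)) (h g : DihedralGroup n) :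
    (c * MonoidAlgebra.of ℤ (DihedralGroup n) h).coeff g = c.coeff (g * h⁻¹) := by
  rw [MonoidAlgebra.of_apply, MonoidAlgebra.coeff_mul_single_apply, mul_one]

private lemma coeff_mul_X (c : MonoidAlgebra ℤ (DihedralGroup n)) (g : DihedralGroup n) :
    (c * XD n).coeff g = c.coeff (g * DihedralGroup.r (-1)) := by
  rw [XD, coeff_mul_of, dg_r_inv]

private lemma coeff_mul_XY (c : MonoidAlgebra ℤ (DihedralGroup n)) (g : DihedralGroup n) :
    (c * (XD n * YD n)).coeff g = c.coeff (g * DihedralGroup.sr (-1)) := by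
  rw [XYD, coeff_mul_of, dg_sr_inv]

private lemma coeff_mul_Y (c : MonoidAlgebra ℤ (DihedralGroup n)) (g : DihedralGroup n) :
    (c * YD n).coeff g = c.coeff (g * DihedralGroup.sr 0) := by
  rw [YD, coeff_mul_of, dg_sr_inv]

private lemma coeff_mul_Nx (c : MonoidAlgebra ℤ (DihedralGroup n)) (g : DihedralGroup n) :
    (c * NxD n).coeff g = ∑ j ∈ Finset.range n, c.coeff (g * DihedralGroup.r (-(j : ZMod n))) := by
  rw [NxD, Finset.mul_sum, MonoidAlgebra.coeff_sum, Finsupp.finset_sum_apply]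
  refine Finset.sum_congr rfl fun j _ => ?_
  rw [XD_pow, coeff_mul_of, dg_r_inv]

private lemma sum_zmod [NeZero n] (f : ZMod n → ℤ) :
    ∑ k ∈ Finset.range n, f (k : ZMod n) = ∑ i : ZMod n, f i := by
  refine Finset.sum_nbij' (fun k => (k : ZMod n)) (fun i => i.val) ?_ ?_ ?_ ?_ ?_
  · intro a _; exact Finset.mem_univ _
  · intro i _; exact Finset.mem_range.mpr (ZMod.val_lt i)
  · intro a ha; exact ZMod.val_cast_of_lt (Finset.mem_range.mp ha)
  · intro i _; exact ZMod.natCast_rightInverse i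
  · intro a _; rfl

private lemma sum_shift [NeZero n] (f : ZMod n → ℤ) (c : ZMod n) :
    ∑ i : ZMod n, f (c - i) = ∑ i : ZMod n, f i :=
  Fintype.sum_equiv (Equiv.subLeft c) _ _ fun i => rfl

private lemma sum_shift' [NeZero n] (f : ZMod n → ℤ) (c : ZMod n) :
    ∑ i : ZMod n, f (i - c) = ∑ i : ZMod n, f i :=
  Fintype.sum_equiv (Equiv.subRight c) _ _ fun i => rfl

private lemma sum_neg [NeZero n] (f : ZMod n → ℤ) :
    ∑ i : ZMod n, f (-i) = ∑ i : ZMod n, f i :=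
  Fintype.sum_equiv (Equiv.neg _) _ _ fun i => rfl

private lemma Nelt_coeff [NeZero n] (g : DihedralGroup n) : (Nelt (DihedralGroup n)).coeff g = 1 := by
  rw [Nelt, MonoidAlgebra.coeff_sum, Finsupp.finset_sum_apply]
  simp [MonoidAlgebra.of_apply, MonoidAlgebra.coeff_single, Finsupp.single_apply]

private lemma Nelt_mul_of [NeZero n] (h : DihedralGroup n) :
    Nelt (DihedralGroup n) * MonoidAlgebra.of ℤ (DihedralGroup n) h = Nelt (DihedralGroup n) := by
  ext g
  rw [coeff_mul_of, Nelt_coeff, Nelt_coeff]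

private lemma X_mul_Nx [NeZero n] : XD n * NxD n = NxD n := by
  have key : XD n * NxD n = ∑ j ∈ Finset.range n, XD n ^ (j + 1) := by
    rw [NxD, Finset.mul_sum]
    exact Finset.sum_congr rfl fun j _ => (pow_succ' _ _).symm
  have h2 : ∑ j ∈ Finset.range (n + 1), XD n ^ j
      = (∑ j ∈ Finset.range n, XD n ^ (j + 1)) + XD n ^ 0 := Finset.sum_range_succ' _ n
  have h3 : ∑ j ∈ Finset.range (n + 1), XD n ^ j = NxD n + XD n ^ n := by
    rw [Finset.sum_range_succ, NxD]
  have h4 : XD n ^ n = 1 := by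
    rw [XD_pow, ZMod.natCast_self, ← DihedralGroup.one_def, map_one]
  have h5 := h2.symm.trans h3
  rw [pow_zero, h4] at h5
  rw [key]
  exact add_right_cancel h5

private lemma Xm1_mul_Nx [NeZero n] : (XD n - 1) * NxD n = 0 := by
  rw [sub_mul, one_mul, X_mul_Nx, sub_self]

private lemma XY_sq [NeZero n] : (XD n * YD n) * (XD n * YD n) = 1 := by
  rw [XYD, ← map_mul, DihedralGroup.sr_mul_sr, sub_self, ← DihedralGroup.one_def, map_one]

private lemma one_sub_XY_mul [NeZero n] : (1 - XD n * YD n) * (1 + XD n * YD n) = 0 := by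
  have h2 : XD n * YD n * (1 + XD n * YD n) = XD n * YD n + 1 := by
    rw [mul_add, mul_one, XY_sq]
  rw [sub_mul, one_mul, h2]
  noncomm_ring

private lemma cross_identity [NeZero n] :
    -((XD n - 1) * (1 + YD n)) + (1 - XD n * YD n) * (XD n - 1) = 0 := by
  have h1 : XD n * YD n * XD n = YD n := by
    rw [XYD, XD, ← map_mul, DihedralGroup.sr_mul_r, neg_add_cancel, YD]
  have h2 : XD n * YD n * (XD n - 1) = YD n - XD n * YD n := by
    rw [mul_sub, mul_one, h1]
  rw [sub_mul (1 : MonoidAlgebra ℤ (DihedralGroup n)), one_mul, h2]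
  noncomm_ring

end Stmt14Aux

section Stmt14Main

open DihedralGroup Finset

variable {n : ℕ}

private lemma stmt_exact2 [NeZero n] (v : MonoidAlgebra ℤ (DihedralGroup n))
    (h1 : v * (XD n - 1) = 0) (h2 : v * (1 - XD n * YD n) = 0) :
    ∃ k : ℤ, k • Nelt (DihedralGroup n) = v := by
  rw [mul_sub, mul_one] at h1 h2
  have hx : ∀ g, v.coeff (g * DihedralGroup.r (-1)) = v.coeff g := by
    intro g
    have h : (v * XD n - v).coeff g = (0 : MonoidAlgebra ℤ (DihedralGroup n)).coeff g := by rw [h1]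
    rw [MonoidAlgebra.coeff_sub, MonoidAlgebra.coeff_zero, Finsupp.sub_apply, coeff_mul_X, Finsupp.zero_apply] at h
    linarith
  have hxy : ∀ g, v.coeff g = v.coeff (g * DihedralGroup.sr (-1)) := by
    intro g
    have h : (v - v * (XD n * YD n)).coeff g = (0 : MonoidAlgebra ℤ (DihedralGroup n)).coeff g := by rw [h2]
    rw [MonoidAlgebra.coeff_sub, MonoidAlgebra.coeff_zero, Finsupp.sub_apply, coeff_mul_XY, Finsupp.zero_apply] at h
    linarith
  have hrot : ∀ (m : ℕ) (i : ZMod n), v.coeff (DihedralGroup.r (i - (m : ZMod n))) = v.coeff (DihedralGroup.r i) := by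
    intro m
    induction m with
    | zero => intro i; simp
    | succ m ih =>
      intro i
      have e : i - ((m + 1 : ℕ) : ZMod n) = (i - (m : ZMod n)) + -1 := by push_cast; ring
      rw [e, ← DihedralGroup.r_mul_r, hx, ih]
  have hr : ∀ i : ZMod n, v.coeff (DihedralGroup.r i) = v.coeff (DihedralGroup.r 0) := by
    intro i
    have h0 : i - ((i.val : ℕ) : ZMod n) = 0 := by
      rw [ZMod.natCast_rightInverse i, sub_self]
    have h := hrot i.val i
    rw [h0] at h
    exact h.symm
  have hs : ∀ i : ZMod n, v.coeff (DihedralGroup.sr i) = v.coeff (DihedralGroup.r 0) := by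
    intro i
    have h := hxy (DihedralGroup.r (-1 - i))
    rw [DihedralGroup.r_mul_sr] at h
    have e : (-1 : ZMod n) - (-1 - i) = i := by ring
    rw [e] at h
    rw [← h, hr]
  refine ⟨v.coeff (DihedralGroup.r 0), ?_⟩
  ext g
  rw [MonoidAlgebra.coeff_smul, Finsupp.smul_apply, Nelt_coeff, smul_eq_mul, mul_one]
  cases g with
  | r i => exact (hr i).symm
  | sr i => exact (hs i).symm

private def Wfun (n : ℕ) (A : ZMod n → ℤ) (i : ZMod n) : ℤ :=
  -∑ k ∈ Finset.range i.val, A (((k + 1 : ℕ) : ZMod n))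

private lemma Wfun_spec [NeZero n] (A : ZMod n → ℤ) (hA : ∑ i : ZMod n, A i = 0) (i : ZMod n) :
    Wfun n A (i - 1) - Wfun n A i = A i := by
  rcases eq_or_ne i 0 with rfl | hi
  · rcases n with - | m
    · exact absurd rfl (NeZero.ne 0)
    have hval : ((0 : ZMod (m + 1)) - 1).val = m := by
      rw [zero_sub]; exact ZMod.val_neg_one m
    have hA' : ∑ k ∈ Finset.range (m + 1), A ((k : ZMod (m + 1))) = 0 := by
      rw [sum_zmod]; exact hA
    rw [Finset.sum_range_succ' (fun k => A ((k : ZMod (m + 1)))) m] at hA'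
    simp only [Nat.cast_zero] at hA'
    rw [Wfun, Wfun, hval, ZMod.val_zero, Finset.sum_range_zero, neg_zero, sub_zero]
    linarith
  · have hvne : i.val ≠ 0 := fun h => hi ((ZMod.val_eq_zero i).mp h)
    obtain ⟨m, hm⟩ : ∃ m, i.val = m + 1 := ⟨i.val - 1, (Nat.succ_pred_eq_of_ne_zero hvne).symm⟩
    have hilt : m + 1 < n := by rw [← hm]; exact ZMod.val_lt i
    have hieq : ((m + 1 : ℕ) : ZMod n) = i := by rw [← hm]; exact ZMod.natCast_rightInverse i
    have hi1 : i - 1 = ((m : ℕ) : ZMod n) := by rw [← hieq]; push_cast; ring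
    have hval1 : (i - 1).val = m := by
      rw [hi1]; exact ZMod.val_cast_of_lt (by omega)
    rw [Wfun, Wfun, hval1, hm, Finset.sum_range_succ, ← hm, ZMod.natCast_rightInverse i]
    ring

private def Vfun (n : ℕ) (A B' : ZMod n → ℤ) : DihedralGroup n → ℤ
  | DihedralGroup.r i => Wfun n A i
  | DihedralGroup.sr i => Wfun n A (-1 - i) + B' i

private lemma stmt_exact3 [NeZero n] (a b : MonoidAlgebra ℤ (DihedralGroup n))
    (h1 : a * NxD n + b * (1 + XD n * YD n) = 0)
    (h2 : -(a * (1 + YD n)) + b * (XD n - 1) = 0) :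
    ∃ v, v * (XD n - 1) = a ∧ v * (1 - XD n * YD n) = b := by
  rw [mul_add, mul_one] at h1
  rw [mul_add, mul_one, mul_sub, mul_one] at h2
  -- coefficient equations
  have E1r : ∀ i : ZMod n, (∑ t : ZMod n, a.coeff (DihedralGroup.r t))
      + (b.coeff (DihedralGroup.r i) + b.coeff (DihedralGroup.sr (-1 - i))) = 0 := by
    intro i
    have h : (a * NxD n + (b + b * (XD n * YD n))).coeff (DihedralGroup.r i)
        = (0 : MonoidAlgebra ℤ (DihedralGroup n)).coeff (DihedralGroup.r i) := by rw [h1]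
    simp only [MonoidAlgebra.coeff_add, MonoidAlgebra.coeff_sub, MonoidAlgebra.coeff_neg,
      MonoidAlgebra.coeff_zero] at h
    rw [Finsupp.add_apply, Finsupp.add_apply, coeff_mul_Nx, coeff_mul_XY,
      Finsupp.zero_apply] at h
    simp only [DihedralGroup.r_mul_r, DihedralGroup.r_mul_sr] at h
    simp_rw [← sub_eq_add_neg] at h
    rw [sum_zmod (fun t => a.coeff (DihedralGroup.r (i - t))),
      sum_shift (fun t => a.coeff (DihedralGroup.r t))] at h
    exact h
  have E1s : ∀ i : ZMod n, (∑ t : ZMod n, a.coeff (DihedralGroup.sr t))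
      + (b.coeff (DihedralGroup.sr i) + b.coeff (DihedralGroup.r (-1 - i))) = 0 := by
    intro i
    have h : (a * NxD n + (b + b * (XD n * YD n))).coeff (DihedralGroup.sr i)
        = (0 : MonoidAlgebra ℤ (DihedralGroup n)).coeff (DihedralGroup.sr i) := by rw [h1]
    simp only [MonoidAlgebra.coeff_add, MonoidAlgebra.coeff_sub, MonoidAlgebra.coeff_neg,
      MonoidAlgebra.coeff_zero] at h
    rw [Finsupp.add_apply, Finsupp.add_apply, coeff_mul_Nx, coeff_mul_XY,
      Finsupp.zero_apply] at h
    simp only [DihedralGroup.sr_mul_r, DihedralGroup.sr_mul_sr] at h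
    simp_rw [← sub_eq_add_neg] at h
    rw [sum_zmod (fun t => a.coeff (DihedralGroup.sr (i - t))),
      sum_shift (fun t => a.coeff (DihedralGroup.sr t))] at h
    exact h
  have E2r : ∀ i : ZMod n, -(a.coeff (DihedralGroup.r i) + a.coeff (DihedralGroup.sr (-i)))
      + (b.coeff (DihedralGroup.r (i - 1)) - b.coeff (DihedralGroup.r i)) = 0 := by
    intro i
    have h : (-(a + a * YD n) + (b * XD n - b)).coeff (DihedralGroup.r i)
        = (0 : MonoidAlgebra ℤ (DihedralGroup n)).coeff (DihedralGroup.r i) := by rw [h2]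
    simp only [MonoidAlgebra.coeff_add, MonoidAlgebra.coeff_sub, MonoidAlgebra.coeff_neg,
      MonoidAlgebra.coeff_zero] at h
    rw [Finsupp.add_apply, Finsupp.neg_apply, Finsupp.add_apply, Finsupp.sub_apply,
      coeff_mul_Y, coeff_mul_X, Finsupp.zero_apply] at h
    simp only [DihedralGroup.r_mul_sr, DihedralGroup.r_mul_r] at h
    simp_rw [zero_sub, ← sub_eq_add_neg] at h
    exact h
  have E2s : ∀ i : ZMod n, -(a.coeff (DihedralGroup.sr i) + a.coeff (DihedralGroup.r (-i)))
      + (b.coeff (DihedralGroup.sr (i - 1)) - b.coeff (DihedralGroup.sr i)) = 0 := by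
    intro i
    have h : (-(a + a * YD n) + (b * XD n - b)).coeff (DihedralGroup.sr i)
        = (0 : MonoidAlgebra ℤ (DihedralGroup n)).coeff (DihedralGroup.sr i) := by rw [h2]
    simp only [MonoidAlgebra.coeff_add, MonoidAlgebra.coeff_sub, MonoidAlgebra.coeff_neg,
      MonoidAlgebra.coeff_zero] at h
    rw [Finsupp.add_apply, Finsupp.neg_apply, Finsupp.add_apply, Finsupp.sub_apply,
      coeff_mul_Y, coeff_mul_X, Finsupp.zero_apply] at h
    simp only [DihedralGroup.sr_mul_sr, DihedralGroup.sr_mul_r] at h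
    simp_rw [zero_sub, ← sub_eq_add_neg] at h
    exact h
  -- the two augmentation sums
  have hE : (∑ t : ZMod n, a.coeff (DihedralGroup.r t)) = ∑ t : ZMod n, a.coeff (DihedralGroup.sr t) := by
    have e1 := E1r 0
    have e2 := E1s (-1)
    rw [sub_zero] at e1
    have e : (-1 : ZMod n) - (-1) = 0 := by ring
    rw [e] at e2
    linarith
  have hsum : (∑ t : ZMod n, a.coeff (DihedralGroup.r t)) + (∑ t : ZMod n, a.coeff (DihedralGroup.sr t)) = 0 := by
    have key : ∀ i : ZMod n, a.coeff (DihedralGroup.r i) + a.coeff (DihedralGroup.sr (-i))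
        = b.coeff (DihedralGroup.r (i - 1)) - b.coeff (DihedralGroup.r i) := by
      intro i; have := E2r i; linarith
    have hk := Finset.sum_congr rfl (fun i (_ : i ∈ Finset.univ) => key i)
    rw [Finset.sum_add_distrib, Finset.sum_sub_distrib,
      sum_neg (fun t => a.coeff (DihedralGroup.sr t)),
      sum_shift' (fun t => b.coeff (DihedralGroup.r t)) 1] at hk
    linarith
  have hA0 : (∑ t : ZMod n, a.coeff (DihedralGroup.r t)) = 0 := by linarith
  have hW := Wfun_spec (fun t => a.coeff (DihedralGroup.r t)) hA0
  -- the preimage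
  refine ⟨MonoidAlgebra.ofCoeff (Finsupp.equivFunOnFinite.symm
    (Vfun n (fun t => a.coeff (DihedralGroup.r t)) (fun t => b.coeff (DihedralGroup.sr t)))), ?_, ?_⟩
  · ext g
    rw [mul_sub, mul_one, MonoidAlgebra.coeff_sub, Finsupp.sub_apply, coeff_mul_X]
    cases g with
    | r i =>
      rw [DihedralGroup.r_mul_r, ← sub_eq_add_neg]
      simp only [MonoidAlgebra.coeff_ofCoeff, Finsupp.coe_equivFunOnFinite_symm, Vfun]
      exact hW i
    | sr i =>
      rw [DihedralGroup.sr_mul_r, ← sub_eq_add_neg]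
      simp only [MonoidAlgebra.coeff_ofCoeff, Finsupp.coe_equivFunOnFinite_symm, Vfun]
      have e2 : (-1 : ZMod n) - (i - 1) = -i := by ring
      rw [e2]
      have h3 := hW (-i)
      have e3 : -i - 1 = -1 - i := by ring
      rw [e3] at h3
      have h4 := E2s i
      linarith
  · ext g
    rw [mul_sub, mul_one, MonoidAlgebra.coeff_sub, Finsupp.sub_apply, coeff_mul_XY]
    cases g with
    | r i =>
      rw [DihedralGroup.r_mul_sr]
      simp only [MonoidAlgebra.coeff_ofCoeff, Finsupp.coe_equivFunOnFinite_symm, Vfun]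
      have e : (-1 : ZMod n) - (-1 - i) = i := by ring
      rw [e]
      have h4 := E1r i
      rw [hA0] at h4
      linarith
    | sr i =>
      rw [DihedralGroup.sr_mul_sr]
      simp only [MonoidAlgebra.coeff_ofCoeff, Finsupp.coe_equivFunOnFinite_symm, Vfun]
      ring

end Stmt14Main

/-- For `π = D_{2n} = ⟨x, y | xⁿ = y², xyx = y, y² = 1⟩` the dihedral group of
order `2n`, the sequence `0 → ℤ → ℤπ → ℤπ² → ℤπ²` is exact, where the first map is
multiplication by the norm element `N`, the second sends `v` to `(v(x-1), v(1-xy))` and the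
third sends `(v, w)` to `(vN_x + w(1+xy), -v(1+y) + w(x-1))`. -/
theorem stmt14 (n : ℕ) [NeZero n] :
    (Function.Injective fun k : ℤ => k • Nelt (DihedralGroup n)) ∧
    Function.Exact (fun k : ℤ => k • Nelt (DihedralGroup n))
      (fun v : MonoidAlgebra ℤ (DihedralGroup n) =>
        (v * (XD n - 1), v * (1 - XD n * YD n))) ∧
    Function.Exact
      (fun v : MonoidAlgebra ℤ (DihedralGroup n) =>
        (v * (XD n - 1), v * (1 - XD n * YD n)))
      (fun vw : MonoidAlgebra ℤ (DihedralGroup n) × MonoidAlgebra ℤ (DihedralGroup n) =>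
        (vw.1 * NxD n + vw.2 * (1 + XD n * YD n),
         -(vw.1 * (1 + YD n)) + vw.2 * (XD n - 1))) := by
  constructor
  · -- injectivity
    intro k k' h
    have h' : (k • Nelt (DihedralGroup n)).coeff (1 : DihedralGroup n)
        = (k' • Nelt (DihedralGroup n)).coeff (1 : DihedralGroup n) :=
      congrArg (fun c : MonoidAlgebra ℤ (DihedralGroup n) => c.coeff 1) h
    rwa [MonoidAlgebra.coeff_smul, MonoidAlgebra.coeff_smul, Finsupp.smul_apply, Finsupp.smul_apply, Nelt_coeff, smul_eq_mul, smul_eq_mul,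
      mul_one, mul_one] at h'
  constructor
  · -- exactness at ℤπ
    intro v
    constructor
    · intro hv
      have hv1 : v * (XD n - 1) = 0 := by
        have := congrArg Prod.fst hv; simpa using this
      have hv2 : v * (1 - XD n * YD n) = 0 := by
        have := congrArg Prod.snd hv; simpa using this
      obtain ⟨k, hk⟩ := stmt_exact2 v hv1 hv2
      exact ⟨k, hk⟩
    · rintro ⟨k, rfl⟩
      have hNX : Nelt (DihedralGroup n) * (XD n - 1) = 0 := by
        rw [mul_sub, mul_one, XD, Nelt_mul_of, sub_self]
      have hNXY : Nelt (DihedralGroup n) * (1 - XD n * YD n) = 0 := by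
        rw [mul_sub, mul_one, XYD, Nelt_mul_of, sub_self]
      simp only [smul_mul_assoc, hNX, hNXY, smul_zero]
      rfl
  · -- exactness at ℤπ²
    intro p
    constructor
    · intro hp
      have h1 : p.1 * NxD n + p.2 * (1 + XD n * YD n) = 0 := by
        have := congrArg Prod.fst hp; simpa using this
      have h2 : -(p.1 * (1 + YD n)) + p.2 * (XD n - 1) = 0 := by
        have := congrArg Prod.snd hp; simpa using this
      obtain ⟨v, hva, hvb⟩ := stmt_exact3 p.1 p.2 h1 h2
      exact ⟨v, Prod.ext hva hvb⟩
    · rintro ⟨v, rfl⟩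
      have c1 : v * (XD n - 1) * NxD n + v * (1 - XD n * YD n) * (1 + XD n * YD n) = 0 := by
        rw [mul_assoc, mul_assoc, Xm1_mul_Nx, one_sub_XY_mul, mul_zero, add_zero]
      have c2 : -(v * (XD n - 1) * (1 + YD n)) + v * (1 - XD n * YD n) * (XD n - 1) = 0 := by
        rw [mul_assoc, mul_assoc, ← mul_neg, ← mul_add, cross_identity, mul_zero]
      show (v * (XD n - 1) * NxD n + v * (1 - XD n * YD n) * (1 + XD n * YD n),
        -(v * (XD n - 1) * (1 + YD n)) + v * (1 - XD n * YD n) * (XD n - 1)) = 0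
      rw [c1, c2]
      rfl
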